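/- Let n ≥ 2, let C be a cone in ℝⁿ, and suppose C is not contained in the zero set of any nonzero homogeneous harmonic polynomial on ℝⁿ. If f ∈ L¹(σ) satisfies ∫_{S^{n-1}} exp(-i ⟪ξ, η⟫) f(η) dσ(η) = 0 for every ξ ∈ C, then f = 0 σ-almost everywhere. -/

import Mathlib

open MeasureTheory Pointwise

/-- The surface measure on the unit sphere `S^{n-1}` in `ℝⁿ`. -/
noncomputable def sphereMeasure (n : ℕ) : Measure (EuclideanSpace ℝ (Fin n)) :=
  (μH[(n : ℝ) - 1]).restrict (Metric.sphere (0 : EuclideanSpace ℝ (Fin n)) 1)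

/-- `P` is a homogeneous harmonic polynomial of degree `l` on `ℝⁿ`. -/
def IsHomHarmonic {n : ℕ} (P : MvPolynomial (Fin n) ℝ) (l : ℕ) : Prop :=
  P.IsHomogeneous l ∧ ∑ i : Fin n, MvPolynomial.pderiv i (MvPolynomial.pderiv i P) = 0

namespace NCU

open MvPolynomial Finset

variable {n : ℕ}

lemma sphere_ae : ∀ᵐ η ∂(sphereMeasure n), ‖η‖ = 1 := by
  rw [sphereMeasure]
  filter_upwards [ae_restrict_mem (Metric.isClosed_sphere.measurableSet)] with η hη
  simpa [mem_sphere_iff_norm] using hη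

lemma coord_le {x : EuclideanSpace ℝ (Fin n)} (i : Fin n) : |x i| ≤ ‖x‖ := by
  rw [EuclideanSpace.norm_eq]
  have h1 : |x i| ^ 2 ≤ ∑ j, ‖x j‖ ^ 2 := by
    have := Finset.single_le_sum (f := fun j => ‖x j‖ ^ 2)
      (fun j _ => sq_nonneg _) (Finset.mem_univ i)
    simpa [Real.norm_eq_abs] using this
  calc |x i| = Real.sqrt (|x i| ^ 2) := by rw [Real.sqrt_sq (abs_nonneg _)]
    _ ≤ _ := Real.sqrt_le_sqrt h1

lemma sum_sq_eq_one {η : EuclideanSpace ℝ (Fin n)} (hη : ‖η‖ = 1) :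
    ∑ i, η i ^ 2 = 1 := by
  have h := EuclideanSpace.norm_eq η
  rw [hη] at h
  have h2 : (1:ℝ) ^ 2 = (Real.sqrt (∑ i, ‖η i‖ ^ 2)) ^ 2 := by rw [← h]
  rw [Real.sq_sqrt (by positivity)] at h2
  simpa [Real.norm_eq_abs, sq_abs] using h2.symm

lemma integrable_mul_bdd {𝕜 : Type*} [RCLike 𝕜] {g : EuclideanSpace ℝ (Fin n) → 𝕜}
    (hg : Integrable g (sphereMeasure n)) {φ : EuclideanSpace ℝ (Fin n) → 𝕜}
    (hφ : Continuous φ) {B : ℝ}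
    (hB : ∀ η : EuclideanSpace ℝ (Fin n), ‖η‖ = 1 → ‖φ η‖ ≤ B) :
    Integrable (fun η => φ η * g η) (sphereMeasure n) := by
  have hmeas : AEStronglyMeasurable (fun η => φ η * g η) (sphereMeasure n) :=
    hφ.aestronglyMeasurable.mul hg.1
  refine (hg.norm.const_mul B).mono' hmeas ?_
  filter_upwards [sphere_ae] with η hη
  calc ‖φ η * g η‖ = ‖φ η‖ * ‖g η‖ := norm_mul _ _
    _ ≤ B * ‖g η‖ := by
        have := hB η hη
        have h3 : (0:ℝ) ≤ ‖g η‖ := norm_nonneg _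
        nlinarith [norm_nonneg (φ η)]

end NCU
namespace NCU

variable {n : ℕ}

lemma norm_exp_aux (r s : ℝ) : ‖Complex.exp (-Complex.I * (r:ℂ) * (s:ℂ))‖ = 1 := by
  have h : -Complex.I * (r:ℂ) * (s:ℂ) = ((-(r*s):ℝ):ℂ) * Complex.I := by push_cast; ring
  rw [h, Complex.norm_exp_ofReal_mul_I]

lemma cont_inner (ξ : EuclideanSpace ℝ (Fin n)) :
    Continuous fun η : EuclideanSpace ℝ (Fin n) => (inner ℝ ξ η : ℝ) :=
  continuous_const.inner continuous_id

lemma cmoments (C : Set (EuclideanSpace ℝ (Fin n))) (hC : ∀ c : ℝ, c • C ⊆ C)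
    (f : EuclideanSpace ℝ (Fin n) → ℂ) (hf : Integrable f (sphereMeasure n))
    (hvanish : ∀ ξ ∈ C, ∫ η, Complex.exp (-Complex.I * ((inner ℝ ξ η : ℝ) : ℂ)) * f η
        ∂(sphereMeasure n) = 0)
    (ξ : EuclideanSpace ℝ (Fin n)) (hξ : ξ ∈ C) (k : ℕ) :
    ∫ η, ((inner ℝ ξ η : ℝ) : ℂ) ^ k * f η ∂(sphereMeasure n) = 0 := by
  set σ := sphereMeasure n with hσ
  set c : EuclideanSpace ℝ (Fin n) → ℂ := fun η => ((inner ℝ ξ η : ℝ) : ℂ) with hc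
  have hccont : Continuous c := Complex.continuous_ofReal.comp (cont_inner ξ)
  have hcbound : ∀ η : EuclideanSpace ℝ (Fin n), ‖η‖ = 1 → ∀ j : ℕ, ‖c η ^ j‖ ≤ ‖ξ‖ ^ j := by
    intro η hη j
    rw [norm_pow]
    refine pow_le_pow_left₀ (norm_nonneg _) ?_ j
    rw [hc, Complex.norm_real, Real.norm_eq_abs]
    calc |(inner ℝ ξ η : ℝ)| ≤ ‖ξ‖ * ‖η‖ := abs_real_inner_le_norm ξ η
      _ = ‖ξ‖ := by rw [hη, mul_one]
  have hexpcont : ∀ t : ℝ, Continuous fun η => Complex.exp (-Complex.I * c η * t) :=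
    fun t => Complex.continuous_exp.comp ((continuous_const.mul hccont).mul continuous_const)
  have hmeas : ∀ (j : ℕ) (t : ℝ),
      AEStronglyMeasurable (fun η => c η ^ j * Complex.exp (-Complex.I * c η * t) * f η) σ := by
    intro j t
    exact (((hccont.pow j).mul (hexpcont t)).aestronglyMeasurable).mul hf.1
  have hint : ∀ (j : ℕ) (t : ℝ),
      Integrable (fun η => c η ^ j * Complex.exp (-Complex.I * c η * t) * f η) σ := by
    intro j t
    refine integrable_mul_bdd hf ((hccont.pow j).mul (hexpcont t)) (B := ‖ξ‖ ^ j) ?_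
    intro η hη
    rw [norm_mul]
    calc ‖c η ^ j‖ * ‖Complex.exp (-Complex.I * c η * t)‖
        = ‖c η ^ j‖ * 1 := by rw [norm_exp_aux]
      _ ≤ ‖ξ‖ ^ j := by rw [mul_one]; exact hcbound η hη j
  have key : ∀ (j : ℕ) (t : ℝ),
      ∫ η, c η ^ j * Complex.exp (-Complex.I * c η * t) * f η ∂σ = 0 := by
    intro j
    induction j with
    | zero =>
      intro t
      have h1 : t • ξ ∈ C := hC t ⟨ξ, hξ, rfl⟩
      have h2 := hvanish _ h1
      rw [← h2]
      apply integral_congr_ae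
      filter_upwards with η
      rw [pow_zero, one_mul]
      have h3 : (-Complex.I * ((inner ℝ (t • ξ) η : ℝ) : ℂ)) = -Complex.I * c η * t := by
        rw [real_inner_smul_left]; push_cast; ring
      rw [h3]
    | succ j ih =>
      intro t
      have hD := hasDerivAt_integral_of_dominated_loc_of_deriv_le (𝕜 := ℝ) (μ := σ)
        (F := fun s η => c η ^ j * Complex.exp (-Complex.I * c η * s) * f η)
        (F' := fun s η => (-Complex.I) * (c η ^ (j+1) * Complex.exp (-Complex.I * c η * s) * f η))
        (x₀ := t) (s := Metric.ball t 1) (bound := fun η => ‖ξ‖ ^ (j+1) * ‖f η‖) (Metric.ball_mem_nhds t one_pos)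
        (Filter.Eventually.of_forall fun s => hmeas j s)
        (hint j t)
        ((hmeas (j+1) t).const_mul (-Complex.I))
        ?_ ?_ ?_
      · have hG : (fun s : ℝ => ∫ η, c η ^ j * Complex.exp (-Complex.I * c η * s) * f η ∂σ)
            = fun _ => (0:ℂ) := funext fun s => ih s
        have hzero : HasDerivAt (fun _ : ℝ => (0:ℂ)) 0 t := hasDerivAt_const _ _
        have h4 : (∫ η, (-Complex.I) * (c η ^ (j+1) * Complex.exp (-Complex.I * c η * t) * f η) ∂σ)
            = 0 := by
          have h5 := hD.2
          rw [hG] at h5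
          exact h5.unique hzero
        rw [integral_const_mul] at h4
        rcases mul_eq_zero.mp h4 with h | h
        · exact absurd h (by simp [Complex.I_ne_zero])
        · exact h
      · -- bound
        filter_upwards [sphere_ae] with η hη
        intro x _
        have hb := hcbound η hη (j+1)
        calc ‖(-Complex.I) * (c η ^ (j+1) * Complex.exp (-Complex.I * c η * x) * f η)‖
            = ‖(-Complex.I)‖ * (‖c η ^ (j+1)‖ * ‖Complex.exp (-Complex.I * c η * x)‖ * ‖f η‖) := by
              rw [norm_mul, norm_mul, norm_mul]
          _ = ‖c η ^ (j+1)‖ * ‖f η‖ := by rw [norm_neg, Complex.norm_I, norm_exp_aux]; ring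
          _ ≤ ‖ξ‖ ^ (j+1) * ‖f η‖ := by
              have := norm_nonneg (f η); nlinarith [norm_nonneg (c η ^ (j+1))]
      · exact hf.norm.const_mul _
      · -- differentiability
        filter_upwards with η
        intro x _
        have h0 : HasDerivAt (fun z : ℂ => -Complex.I * c η * z) (-Complex.I * c η) x := by
          simpa using (hasDerivAt_id (x:ℂ)).const_mul (-Complex.I * c η)
        have h1 := h0.cexp
        have h2 := h1.comp_ofReal
        have h3 := (h2.const_mul (c η ^ j)).mul_const (f η)
        rw [show -Complex.I * (c η ^ (j+1) * Complex.exp (-Complex.I * c η * x) * f η)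
            = c η ^ j * (Complex.exp (-Complex.I * c η * x) * (-Complex.I * c η)) * f η by ring]
        exact h3
  have h0 := key k 0
  rw [← h0]
  apply integral_congr_ae
  filter_upwards with η
  simp only [Complex.ofReal_zero, mul_zero, Complex.exp_zero, mul_one]
  rfl

end NCU
namespace NCU

open MvPolynomial Finset

variable {n : ℕ}

lemma degree_Fs (α : Fin n → ℕ) :
    (Finsupp.equivFunOnFinite.symm α).degree = ∑ i, α i := by
  classical
  rw [Finsupp.degree_apply]
  rw [Finset.sum_subset (Finset.subset_univ _)
    (fun i _ hi => Finsupp.notMem_support_iff.mp hi)]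
  exact Finset.sum_congr rfl fun i _ => congrFun (Finsupp.coe_equivFunOnFinite_symm α) i

lemma inner_eq_sum (ξ η : EuclideanSpace ℝ (Fin n)) :
    (inner ℝ ξ η : ℝ) = ∑ i, ξ i * η i := by
  simp [PiLp.inner_apply, RCLike.inner_apply, conj_trivial]
  exact Finset.sum_congr rfl fun i _ => mul_comm _ _

noncomputable def mom (g : EuclideanSpace ℝ (Fin n) → ℝ) (α : Fin n → ℕ) : ℝ :=
  ∫ η, (∏ i, η i ^ α i) * g η ∂(sphereMeasure n)

lemma intmon {g : EuclideanSpace ℝ (Fin n) → ℝ} (hg : Integrable g (sphereMeasure n))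
    (α : Fin n → ℕ) :
    Integrable (fun η => (∏ i, η i ^ α i) * g η) (sphereMeasure n) := by
  refine integrable_mul_bdd (𝕜 := ℝ) hg
    (continuous_finset_prod _ fun i _ => ((EuclideanSpace.proj (𝕜 := ℝ) i).continuous.pow _))
    (B := 1) ?_
  intro η hη
  rw [Real.norm_eq_abs, Finset.abs_prod]
  refine Finset.prod_le_one (fun i _ => abs_nonneg _) (fun i _ => ?_)
  rw [abs_pow]
  exact pow_le_one₀ (abs_nonneg _) (hη ▸ coord_le i)

noncomputable def Q (g : EuclideanSpace ℝ (Fin n) → ℝ) (k : ℕ) : MvPolynomial (Fin n) ℝ :=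
  ∑ α ∈ Finset.piAntidiag Finset.univ k,
    MvPolynomial.monomial (Finsupp.equivFunOnFinite.symm α)
      ((Nat.multinomial Finset.univ α : ℝ) * mom g α)

lemma evalQ {g : EuclideanSpace ℝ (Fin n) → ℝ} (hg : Integrable g (sphereMeasure n))
    (k : ℕ) (ξ : EuclideanSpace ℝ (Fin n)) :
    MvPolynomial.eval (fun i => ξ i) (Q g k)
      = ∫ η, (inner ℝ ξ η : ℝ) ^ k * g η ∂(sphereMeasure n) := by
  classical
  have hrhs : ∀ η : EuclideanSpace ℝ (Fin n), (inner ℝ ξ η : ℝ) ^ k * g η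
      = ∑ α ∈ piAntidiag (univ : Finset (Fin n)) k,
          ((Nat.multinomial univ α : ℝ) * ∏ i, ξ i ^ α i) * ((∏ i, η i ^ α i) * g η) := by
    intro η
    rw [inner_eq_sum, Finset.sum_pow_eq_sum_piAntidiag, Finset.sum_mul]
    refine Finset.sum_congr rfl fun α _ => ?_
    simp only [mul_pow]
    rw [Finset.prod_mul_distrib]
    ring
  simp_rw [hrhs]
  rw [integral_finset_sum _ (fun α _ => ((intmon hg α).const_mul _))]
  rw [Q, map_sum]
  refine Finset.sum_congr rfl fun α _ => ?_
  rw [MvPolynomial.eval_monomial, integral_const_mul,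
    Finsupp.prod_fintype _ _ (fun i => pow_zero _)]
  simp only [Finsupp.coe_equivFunOnFinite_symm]
  rw [← mom]
  ring

lemma homogQ (g : EuclideanSpace ℝ (Fin n) → ℝ) (k : ℕ) : (Q g k).IsHomogeneous k :=
  MvPolynomial.IsHomogeneous.sum _ _ _ fun α hα =>
    MvPolynomial.isHomogeneous_monomial _
      (by rw [degree_Fs]; exact (Finset.mem_piAntidiag.mp hα).1)

lemma msum {g : EuclideanSpace ℝ (Fin n) → ℝ} (hg : Integrable g (sphereMeasure n))
    (β : Fin n → ℕ) :
    mom g β = ∑ i, mom g (Function.update β i (β i + 2)) := by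
  classical
  have h1 : ∀ (i : Fin n) (η : EuclideanSpace ℝ (Fin n)),
      (∏ j, η j ^ (Function.update β i (β i + 2)) j) = η i ^ 2 * ∏ j, η j ^ β j := by
    intro i η
    have hfun : (fun j => η j ^ (Function.update β i (β i + 2)) j)
        = Function.update (fun j => η j ^ β j) i (η i ^ (β i + 2)) := by
      ext j
      by_cases hj : j = i
      · subst hj; simp
      · rw [Function.update_of_ne hj, Function.update_of_ne hj]
    calc ∏ j, η j ^ (Function.update β i (β i + 2)) j
        = ∏ j, Function.update (fun j => η j ^ β j) i (η i ^ (β i + 2)) j := by rw [hfun]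
      _ = η i ^ (β i + 2) * ∏ j ∈ Finset.univ \ {i}, η j ^ β j :=
          Finset.prod_update_of_mem (Finset.mem_univ i) _ _
      _ = η i ^ 2 * ∏ j, η j ^ β j := by
          rw [Finset.sdiff_singleton_eq_erase,
            ← Finset.mul_prod_erase Finset.univ (fun j => η j ^ β j) (Finset.mem_univ i), pow_add]
          ring
  have h2 : ∀ i : Fin n, mom g (Function.update β i (β i + 2))
      = ∫ η, η i ^ 2 * ((∏ j, η j ^ β j) * g η) ∂(sphereMeasure n) := by
    intro i
    apply integral_congr_ae
    filter_upwards with η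
    simp only [h1]
    ring
  rw [Finset.sum_congr rfl (fun i _ => h2 i)]
  rw [← integral_finset_sum _ (fun i _ => ?_)]
  · apply integral_congr_ae
    filter_upwards [sphere_ae] with η hη
    rw [← Finset.sum_mul, sum_sq_eq_one hη, one_mul]
  · exact (intmon hg (Function.update β i (β i + 2))).congr
      (Filter.Eventually.of_forall fun η => by simp only [h1]; ring)

lemma mult_arith {β : Fin n → ℕ} {k : ℕ} (hk : ∑ j, β j = k) (i : Fin n) :
    Nat.multinomial Finset.univ (Function.update β i (β i + 2)) * ((β i + 2) * (β i + 1))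
      = (k + 2) * (k + 1) * Nat.multinomial Finset.univ β := by
  classical
  set s' := ∑ j ∈ Finset.univ.erase i, β j with hs'
  have hβs : β i + s' = k := by rw [hs', Finset.add_sum_erase _ _ (Finset.mem_univ i)]; exact hk
  set α := Function.update β i (β i + 2) with hα
  have hprodα : ∏ j, (α j).factorial
      = (β i + 2).factorial * ∏ j ∈ Finset.univ.erase i, (β j).factorial := by
    rw [← Finset.mul_prod_erase Finset.univ (fun j => (α j).factorial) (Finset.mem_univ i)]
    congr 1
    · rw [hα, Function.update_self]
    · refine Finset.prod_congr rfl fun j hj => ?_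
      rw [hα, Function.update_of_ne (Finset.mem_erase.mp hj).1]
  have hprodβ : ∏ j, (β j).factorial
      = (β i).factorial * ∏ j ∈ Finset.univ.erase i, (β j).factorial :=
    (Finset.mul_prod_erase Finset.univ (fun j => (β j).factorial) (Finset.mem_univ i)).symm
  have hsumα : ∑ j, α j = β i + 2 + s' := by
    rw [hα, Finset.sum_update_of_mem (Finset.mem_univ i), Finset.sdiff_singleton_eq_erase, ← hs']
  have hsumβ : ∑ j, β j = β i + s' := by
    rw [← Finset.add_sum_erase _ _ (Finset.mem_univ i), ← hs']
  have spec1 := Nat.multinomial_spec Finset.univ α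
  have spec2 := Nat.multinomial_spec Finset.univ β
  rw [hsumα] at spec1
  rw [hsumβ] at spec2
  set Pe := ∏ j ∈ Finset.univ.erase i, (β j).factorial with hPe
  have hpos : 0 < (β i).factorial * Pe :=
    Nat.mul_pos (Nat.factorial_pos _) (Finset.prod_pos fun j _ => Nat.factorial_pos _)
  apply Nat.eq_of_mul_eq_mul_right hpos
  have f1 : (β i + 2).factorial = (β i + 2) * ((β i + 1) * (β i).factorial) := by
    rw [Nat.factorial_succ, Nat.factorial_succ]
  have f2 : (β i + s' + 2).factorial
      = (β i + s' + 2) * ((β i + s' + 1) * (β i + s').factorial) := by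
    rw [Nat.factorial_succ, Nat.factorial_succ]
  subst hβs
  calc Nat.multinomial Finset.univ α * ((β i + 2) * (β i + 1)) * ((β i).factorial * Pe)
      = (∏ j, (α j).factorial) * Nat.multinomial Finset.univ α := by
        rw [hprodα, f1]; ring
    _ = (β i + 2 + s').factorial := spec1
    _ = (β i + s' + 2).factorial := by ring_nf
    _ = (β i + s' + 2) * ((β i + s' + 1) * ((∏ j, (β j).factorial) * Nat.multinomial Finset.univ β)) := by
        rw [spec2, f2]
    _ = (β i + s' + 2) * (β i + s' + 1) * Nat.multinomial Finset.univ β * ((β i).factorial * Pe) := by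
        rw [hprodβ]; ring

end NCU
namespace NCU

open MvPolynomial Finset

variable {n : ℕ}

lemma lap_term (d : Fin n →₀ ℕ) (a : ℝ) (i : Fin n) :
    MvPolynomial.pderiv i (MvPolynomial.pderiv i (MvPolynomial.monomial d a))
      = MvPolynomial.monomial (d - Finsupp.single i 1 - Finsupp.single i 1)
          (a * ((d i : ℝ) * (((d i : ℕ) - 1 : ℕ) : ℝ))) := by
  classical
  rw [MvPolynomial.pderiv_monomial, MvPolynomial.pderiv_monomial]
  congr 1
  rw [Finsupp.tsub_apply, Finsupp.single_eq_same]
  ring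

lemma lapQ_expand (g : EuclideanSpace ℝ (Fin n) → ℝ) (k : ℕ) :
    ∑ i, MvPolynomial.pderiv i (MvPolynomial.pderiv i (Q g k))
      = ∑ i : Fin n, ∑ α ∈ piAntidiag (univ : Finset (Fin n)) k,
          MvPolynomial.monomial
            (Finsupp.equivFunOnFinite.symm α - Finsupp.single i 1 - Finsupp.single i 1)
            (((Nat.multinomial univ α : ℝ) * mom g α) * ((α i : ℝ) * ((α i - 1 : ℕ) : ℝ))) := by
  classical
  refine Finset.sum_congr rfl fun i _ => ?_
  rw [Q, map_sum, map_sum]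
  refine Finset.sum_congr rfl fun α _ => ?_
  rw [lap_term]
  simp only [Finsupp.coe_equivFunOnFinite_symm]

lemma update_update {α : Fin n → ℕ} {i : Fin n} (h2 : 2 ≤ α i) :
    Function.update (Function.update α i (α i - 2)) i
      (Function.update α i (α i - 2) i + 2) = α := by
  ext j
  by_cases hj : j = i
  · subst hj
    rw [Function.update_self, Function.update_self]
    omega
  · rw [Function.update_of_ne hj, Function.update_of_ne hj]

lemma sum_update_aux (α : Fin n → ℕ) (i : Fin n) (v : ℕ) :
    ∑ j, Function.update α i v j = v + ∑ j ∈ Finset.univ.erase i, α j := by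
  rw [Finset.sum_update_of_mem (Finset.mem_univ i), Finset.sdiff_singleton_eq_erase]

lemma sum_erase_aux (α : Fin n → ℕ) (i : Fin n) :
    α i + ∑ j ∈ Finset.univ.erase i, α j = ∑ j, α j :=
  Finset.add_sum_erase _ _ (Finset.mem_univ i)

lemma lap_reindex {g : EuclideanSpace ℝ (Fin n) → ℝ} (k : ℕ) (i : Fin n) :
    (∑ α ∈ piAntidiag (univ : Finset (Fin n)) (k+2),
      MvPolynomial.monomial
        (Finsupp.equivFunOnFinite.symm α - Finsupp.single i 1 - Finsupp.single i 1)
        (((Nat.multinomial univ α : ℝ) * mom g α) * ((α i : ℝ) * ((α i - 1 : ℕ) : ℝ))))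
    = ∑ β ∈ piAntidiag (univ : Finset (Fin n)) k,
        MvPolynomial.monomial (Finsupp.equivFunOnFinite.symm β)
          ((((k+2) * (k+1) * Nat.multinomial univ β : ℕ) : ℝ)
            * mom g (Function.update β i (β i + 2))) := by
  classical
  rw [← Finset.sum_filter_of_ne (p := fun α => 2 ≤ α i)
    (by
      intro α hα hne
      by_contra hlt
      push_neg at hlt
      apply hne
      have h01 : α i = 0 ∨ α i = 1 := by omega
      rcases h01 with h | h <;> simp [h])]
  refine Finset.sum_nbij' (fun α => Function.update α i (α i - 2))
    (fun β => Function.update β i (β i + 2)) ?_ ?_ ?_ ?_ ?_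
  · intro α hα
    rw [Finset.mem_filter] at hα
    obtain ⟨hα1, h2⟩ := hα
    obtain ⟨hsum, -⟩ := Finset.mem_piAntidiag.mp hα1
    have hsum' : ∑ j, α j = k + 2 := hsum
    refine Finset.mem_piAntidiag.mpr ⟨show ∑ j, Function.update α i (α i - 2) j = k from ?_,
      fun _ _ => Finset.mem_univ _⟩
    have h3 := sum_update_aux α i (α i - 2)
    have h4 := sum_erase_aux α i
    omega
  · intro β hβ
    obtain ⟨hsum, -⟩ := Finset.mem_piAntidiag.mp hβ
    have hsum' : ∑ j, β j = k := hsum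
    rw [Finset.mem_filter]
    have h3 := sum_update_aux β i (β i + 2)
    have h4 := sum_erase_aux β i
    constructor
    · refine Finset.mem_piAntidiag.mpr ⟨show ∑ j, Function.update β i (β i + 2) j = k + 2 from ?_,
        fun _ _ => Finset.mem_univ _⟩
      omega
    · rw [Function.update_self]
      omega
  · intro α hα
    rw [Finset.mem_filter] at hα
    exact update_update hα.2
  · intro β _
    ext j
    by_cases hj : j = i
    · subst hj; rw [Function.update_self, Function.update_self]; omega
    · rw [Function.update_of_ne hj, Function.update_of_ne hj]
  · intro α hα
    rw [Finset.mem_filter] at hα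
    obtain ⟨hα1, h2i⟩ := hα
    obtain ⟨hsum, -⟩ := Finset.mem_piAntidiag.mp hα1
    have hsum' : ∑ j, α j = k + 2 := hsum
    have hupd := update_update h2i
    have hβsum : ∑ j, Function.update α i (α i - 2) j = k := by
      have h3 := sum_update_aux α i (α i - 2)
      have h4 := sum_erase_aux α i
      omega
    have harith := mult_arith hβsum i
    rw [hupd] at harith
    rw [Function.update_self] at harith
    rw [show α i - 2 + 2 = α i from by omega, show α i - 2 + 1 = α i - 1 from by omega] at harith
    have hd : Finsupp.equivFunOnFinite.symm α - Finsupp.single i 1 - Finsupp.single i 1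
        = Finsupp.equivFunOnFinite.symm (Function.update α i (α i - 2)) := by
      ext j
      rw [Finsupp.tsub_apply, Finsupp.tsub_apply,
        Finsupp.coe_equivFunOnFinite_symm, Finsupp.coe_equivFunOnFinite_symm]
      by_cases hj : j = i
      · subst hj
        rw [Finsupp.single_eq_same, Function.update_self]
        omega
      · rw [Finsupp.single_eq_of_ne hj, Function.update_of_ne hj]
        omega
    rw [hd, hupd]
    congr 1
    have hc : ((Nat.multinomial univ α : ℕ) : ℝ) * ((α i : ℝ) * ((α i - 1 : ℕ) : ℝ))
        = (((k+2) * (k+1) * Nat.multinomial univ (Function.update α i (α i - 2)) : ℕ) : ℝ) := by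
      rw [← Nat.cast_mul, ← Nat.cast_mul, harith]
    rw [← hc]
    ring

end NCU
namespace NCU

open MvPolynomial Finset

variable {n : ℕ}

lemma lapQ {g : EuclideanSpace ℝ (Fin n) → ℝ} (hg : Integrable g (sphereMeasure n)) (k : ℕ) :
    ∑ i, MvPolynomial.pderiv i (MvPolynomial.pderiv i (Q g (k+2)))
      = (((k+2) * (k+1) : ℕ) : ℝ) • Q g k := by
  classical
  rw [lapQ_expand]
  rw [Finset.sum_congr rfl (fun i _ => lap_reindex k i)]
  rw [Finset.sum_comm]
  rw [Q, Finset.smul_sum]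
  refine Finset.sum_congr rfl fun β hβ => ?_
  rw [← map_sum (MvPolynomial.monomial (Finsupp.equivFunOnFinite.symm β)), smul_monomial]
  congr 1
  rw [← Finset.mul_sum, ← msum hg β, smul_eq_mul]
  push_cast
  ring

lemma lapQ01 (g : EuclideanSpace ℝ (Fin n) → ℝ) (k : ℕ) (hk : k ≤ 1) :
    ∑ i, MvPolynomial.pderiv i (MvPolynomial.pderiv i (Q g k)) = 0 := by
  classical
  rw [lapQ_expand]
  refine Finset.sum_eq_zero fun i _ => Finset.sum_eq_zero fun α hα => ?_
  obtain ⟨hsum, -⟩ := Finset.mem_piAntidiag.mp hα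
  have hsum' : ∑ j, α j = k := hsum
  have h3 : α i ≤ ∑ j, α j :=
    Finset.single_le_sum (fun _ _ => Nat.zero_le _) (Finset.mem_univ i)
  have h01 : α i = 0 ∨ α i = 1 := by omega
  rcases h01 with h | h <;> simp [h]

lemma allQzero (C : Set (EuclideanSpace ℝ (Fin n)))
    (hnonharm : ¬ ∃ (l : ℕ) (P : MvPolynomial (Fin n) ℝ), P ≠ 0 ∧ IsHomHarmonic P l ∧
        C ⊆ {x | MvPolynomial.eval (fun i => x i) P = 0})
    {g : EuclideanSpace ℝ (Fin n) → ℝ} (hg : Integrable g (sphereMeasure n))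
    (hmom : ∀ ξ ∈ C, ∀ k : ℕ, ∫ η, (inner ℝ ξ η : ℝ) ^ k * g η ∂(sphereMeasure n) = 0) :
    ∀ k, Q g k = 0 := by
  intro k
  induction k using Nat.strong_induction_on with
  | _ k ih =>
    by_contra hne
    apply hnonharm
    refine ⟨k, Q g k, hne, ⟨homogQ g k, ?_⟩, fun x hx => ?_⟩
    · match k, ih with
      | 0, _ => exact lapQ01 g 0 (by norm_num)
      | 1, _ => exact lapQ01 g 1 le_rfl
      | (j+2), ih => rw [lapQ hg j, ih j (by omega), smul_zero]
    · show MvPolynomial.eval (fun i => x i) (Q g k) = 0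
      rw [evalQ hg k x]
      exact hmom x hx k

lemma momzero (C : Set (EuclideanSpace ℝ (Fin n)))
    (hnonharm : ¬ ∃ (l : ℕ) (P : MvPolynomial (Fin n) ℝ), P ≠ 0 ∧ IsHomHarmonic P l ∧
        C ⊆ {x | MvPolynomial.eval (fun i => x i) P = 0})
    {g : EuclideanSpace ℝ (Fin n) → ℝ} (hg : Integrable g (sphereMeasure n))
    (hmom : ∀ ξ ∈ C, ∀ k : ℕ, ∫ η, (inner ℝ ξ η : ℝ) ^ k * g η ∂(sphereMeasure n) = 0) :
    ∀ α : Fin n → ℕ, mom g α = 0 := by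
  classical
  intro α
  have hα : α ∈ piAntidiag (univ : Finset (Fin n)) (∑ i, α i) :=
    Finset.mem_piAntidiag.mpr ⟨rfl, fun _ _ => Finset.mem_univ _⟩
  have hco := congrArg (MvPolynomial.coeff (Finsupp.equivFunOnFinite.symm α))
    (allQzero C hnonharm hg hmom (∑ i, α i))
  rw [Q, MvPolynomial.coeff_sum] at hco
  rw [Finset.sum_eq_single α
    (fun α' _ hne => by
      rw [MvPolynomial.coeff_monomial, if_neg]
      exact fun h => hne (Finsupp.equivFunOnFinite.symm.injective h))
    (fun h => absurd hα h)] at hco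
  rw [MvPolynomial.coeff_monomial, if_pos rfl, MvPolynomial.coeff_zero] at hco
  have hmult : ((Nat.multinomial univ α : ℕ) : ℝ) ≠ 0 :=
    Nat.cast_ne_zero.mpr (Nat.multinomial_pos _ _).ne'
  rcases mul_eq_zero.mp hco with h | h
  · exact absurd h hmult
  · exact h

lemma polyint (C : Set (EuclideanSpace ℝ (Fin n)))
    (hnonharm : ¬ ∃ (l : ℕ) (P : MvPolynomial (Fin n) ℝ), P ≠ 0 ∧ IsHomHarmonic P l ∧
        C ⊆ {x | MvPolynomial.eval (fun i => x i) P = 0})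
    {g : EuclideanSpace ℝ (Fin n) → ℝ} (hg : Integrable g (sphereMeasure n))
    (hmom : ∀ ξ ∈ C, ∀ k : ℕ, ∫ η, (inner ℝ ξ η : ℝ) ^ k * g η ∂(sphereMeasure n) = 0)
    (p : MvPolynomial (Fin n) ℝ) :
    ∫ η, MvPolynomial.eval (fun i => η i) p * g η ∂(sphereMeasure n) = 0 := by
  classical
  have hexp : ∀ η : EuclideanSpace ℝ (Fin n), MvPolynomial.eval (fun i => η i) p * g η
      = ∑ d ∈ p.support, MvPolynomial.coeff d p * ((∏ i, η i ^ d i) * g η) := by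
    intro η
    rw [MvPolynomial.eval_eq', Finset.sum_mul]
    exact Finset.sum_congr rfl fun d _ => by ring
  simp_rw [hexp]
  rw [integral_finset_sum _ (fun d _ => ((intmon hg (fun i => d i)).const_mul _))]
  refine Finset.sum_eq_zero fun d _ => ?_
  rw [integral_const_mul]
  have := momzero C hnonharm hg hmom (fun i => d i)
  rw [mom] at this
  rw [this, mul_zero]

end NCU
namespace NCU

open MvPolynomial Finset

variable {n : ℕ}

lemma real_case (C : Set (EuclideanSpace ℝ (Fin n)))
    (hnonharm : ¬ ∃ (l : ℕ) (P : MvPolynomial (Fin n) ℝ), P ≠ 0 ∧ IsHomHarmonic P l ∧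
        C ⊆ {x | MvPolynomial.eval (fun i => x i) P = 0})
    {g : EuclideanSpace ℝ (Fin n) → ℝ} (hg : Integrable g (sphereMeasure n))
    (hmom : ∀ ξ ∈ C, ∀ k : ℕ, ∫ η, (inner ℝ ξ η : ℝ) ^ k * g η ∂(sphereMeasure n) = 0) :
    g =ᵐ[sphereMeasure n] 0 := by
  classical
  haveI : CompactSpace (Metric.sphere (0 : EuclideanSpace ℝ (Fin n)) 1) :=
    isCompact_iff_compactSpace.mp (isCompact_sphere _ _)
  let S := Metric.sphere (0 : EuclideanSpace ℝ (Fin n)) 1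
  let coord : Fin n → C(S, ℝ) := fun i =>
    ⟨fun x => (x : EuclideanSpace ℝ (Fin n)) i,
      (EuclideanSpace.proj (𝕜 := ℝ) i).continuous.comp continuous_subtype_val⟩
  let A : Subalgebra ℝ C(S, ℝ) := Algebra.adjoin ℝ (Set.range coord)
  have hsep : A.SeparatesPoints := by
    intro x y hxy
    have hex : ∃ i, (x : EuclideanSpace ℝ (Fin n)) i ≠ (y : EuclideanSpace ℝ (Fin n)) i := by
      by_contra h
      push_neg at h
      exact hxy (Subtype.ext (PiLp.ext h))
    obtain ⟨i, hi⟩ := hex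
    exact ⟨coord i, ⟨coord i, Algebra.subset_adjoin (Set.mem_range_self i), rfl⟩, hi⟩
  have hrep : ∀ a ∈ A, ∃ p : MvPolynomial (Fin n) ℝ,
      ∀ x : S, a x = MvPolynomial.eval (fun i => (x : EuclideanSpace ℝ (Fin n)) i) p := by
    intro a ha
    induction ha using Algebra.adjoin_induction with
    | mem f hf =>
      obtain ⟨i, rfl⟩ := hf
      exact ⟨MvPolynomial.X i, fun x => by simp [coord]; rfl⟩
    | algebraMap r =>
      exact ⟨MvPolynomial.C r, fun x => by simp⟩
    | add f₁ f₂ h₁ h₂ ih₁ ih₂ =>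
      obtain ⟨p, hp⟩ := ih₁
      obtain ⟨q, hq⟩ := ih₂
      exact ⟨p + q, fun x => by simp [hp x, hq x]⟩
    | mul f₁ f₂ h₁ h₂ ih₁ ih₂ =>
      obtain ⟨p, hp⟩ := ih₁
      obtain ⟨q, hq⟩ := ih₂
      exact ⟨p * q, fun x => by simp [hp x, hq x]⟩
  have hcont0 : ∀ φ : EuclideanSpace ℝ (Fin n) → ℝ, Continuous φ →
      ∫ η, φ η * g η ∂(sphereMeasure n) = 0 := by
    intro φ hφ
    obtain ⟨B, hB⟩ := (isCompact_sphere (0 : EuclideanSpace ℝ (Fin n)) 1).exists_bound_of_continuousOn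
      hφ.continuousOn
    have hint1 : Integrable (fun η => φ η * g η) (sphereMeasure n) :=
      integrable_mul_bdd hg hφ (fun η hη => hB η (mem_sphere_zero_iff_norm.mpr hη))
    have key : ∀ ε : ℝ, 0 < ε → ‖∫ η, φ η * g η ∂(sphereMeasure n)‖
        ≤ ε * ∫ η, ‖g η‖ ∂(sphereMeasure n) := by
      intro ε hε
      obtain ⟨a, ha⟩ := ContinuousMap.exists_mem_subalgebra_near_continuous_of_separatesPoints A
        hsep (fun x : S => φ x) (hφ.comp continuous_subtype_val) ε hε
      obtain ⟨p, hp⟩ := hrep a a.2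
      have hpc : Continuous fun η : EuclideanSpace ℝ (Fin n) =>
          MvPolynomial.eval (fun i => η i) p :=
        (MvPolynomial.continuous_eval p).comp
          (continuous_pi fun i => (EuclideanSpace.proj (𝕜 := ℝ) i).continuous)
      obtain ⟨B2, hB2⟩ := (isCompact_sphere (0 : EuclideanSpace ℝ (Fin n)) 1).exists_bound_of_continuousOn
        hpc.continuousOn
      have hint2 : Integrable (fun η => MvPolynomial.eval (fun i => η i) p * g η) (sphereMeasure n) :=
        integrable_mul_bdd hg hpc (fun η hη => hB2 η (mem_sphere_zero_iff_norm.mpr hη))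
      have hsplit : ∫ η, φ η * g η ∂(sphereMeasure n)
          = ∫ η, (φ η - MvPolynomial.eval (fun i => η i) p) * g η ∂(sphereMeasure n) := by
        calc ∫ η, φ η * g η ∂(sphereMeasure n)
            = (∫ η, φ η * g η ∂(sphereMeasure n))
              - ∫ η, MvPolynomial.eval (fun i => η i) p * g η ∂(sphereMeasure n) := by
              rw [polyint C hnonharm hg hmom p, sub_zero]
          _ = ∫ η, (φ η * g η - MvPolynomial.eval (fun i => η i) p * g η) ∂(sphereMeasure n) :=
              (integral_sub hint1 hint2).symm
          _ = _ := by
              apply integral_congr_ae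
              filter_upwards with η
              ring
      rw [hsplit]
      calc ‖∫ η, (φ η - MvPolynomial.eval (fun i => η i) p) * g η ∂(sphereMeasure n)‖
          ≤ ∫ η, ‖(φ η - MvPolynomial.eval (fun i => η i) p) * g η‖ ∂(sphereMeasure n) :=
            norm_integral_le_integral_norm _
        _ ≤ ∫ η, ε * ‖g η‖ ∂(sphereMeasure n) := by
            refine integral_mono_of_nonneg (Filter.Eventually.of_forall fun η => norm_nonneg _)
              (hg.norm.const_mul ε) ?_
            filter_upwards [sphere_ae] with η hη
            have hmem : η ∈ S := mem_sphere_zero_iff_norm.mpr hη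
            have h1 := ha ⟨η, hmem⟩
            have h2 := hp ⟨η, hmem⟩
            rw [norm_mul]
            have h3 : ‖φ η - MvPolynomial.eval (fun i => η i) p‖ ≤ ε := by
              have : (a : C(S, ℝ)) ⟨η, hmem⟩ = MvPolynomial.eval (fun i => η i) p := h2
              rw [← this]
              have h4 : ‖(a : C(S, ℝ)) ⟨η, hmem⟩ - φ η‖ < ε := h1
              rw [← norm_neg]
              simpa [neg_sub] using h4.le
            exact mul_le_mul_of_nonneg_right h3 (norm_nonneg _)
        _ = ε * ∫ η, ‖g η‖ ∂(sphereMeasure n) := integral_const_mul _ _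
    have hI : ‖∫ η, φ η * g η ∂(sphereMeasure n)‖ ≤ 0 := by
      by_contra hcon
      push_neg at hcon
      set c := ∫ η, ‖g η‖ ∂(sphereMeasure n) with hc
      have hc0 : 0 ≤ c := integral_nonneg fun _ => norm_nonneg _
      set I := ‖∫ η, φ η * g η ∂(sphereMeasure n)‖ with hInorm
      have h1 := key (I / (2 * (c + 1))) (by positivity)
      have h2 : I / (2 * (c + 1)) * c < I := by
        rw [div_mul_eq_mul_div, div_lt_iff₀ (by positivity)]
        nlinarith
      linarith
    exact norm_le_zero_iff.mp hI
  have hfinal := ae_eq_zero_of_integral_contDiff_smul_eq_zero (μ := sphereMeasure n)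
    hg.locallyIntegrable
    (fun φ hφc _ => by simpa [smul_eq_mul] using hcont0 φ hφc.continuous)
  filter_upwards [hfinal] with x hx
  exact hx

end NCU
namespace NCU

variable {n : ℕ}

lemma int_cpow {f : EuclideanSpace ℝ (Fin n) → ℂ} (hf : Integrable f (sphereMeasure n))
    (ξ : EuclideanSpace ℝ (Fin n)) (k : ℕ) :
    Integrable (fun η => ((inner ℝ ξ η : ℝ) : ℂ) ^ k * f η) (sphereMeasure n) := by
  refine integrable_mul_bdd hf ((Complex.continuous_ofReal.comp (cont_inner ξ)).pow k)
    (B := ‖ξ‖ ^ k) ?_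
  intro η hη
  rw [norm_pow]
  refine pow_le_pow_left₀ (norm_nonneg _) ?_ k
  rw [Complex.norm_real, Real.norm_eq_abs]
  calc |(inner ℝ ξ η : ℝ)| ≤ ‖ξ‖ * ‖η‖ := abs_real_inner_le_norm ξ η
    _ = ‖ξ‖ := by rw [hη, mul_one]

end NCU

/-- If a cone `C` is not contained in the zero set of any nonzero homogeneous harmonic
polynomial, then any `f ∈ L¹(σ)` whose Fourier transform (of the measure `f dσ`)
vanishes on `C` is zero `σ`-a.e. -/
theorem nonharmonic_cone_uniqueness (n : ℕ) (hn : 2 ≤ n)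
    (C : Set (EuclideanSpace ℝ (Fin n))) (hC : ∀ c : ℝ, c • C ⊆ C)
    (hnonharm : ¬ ∃ (l : ℕ) (P : MvPolynomial (Fin n) ℝ), P ≠ 0 ∧ IsHomHarmonic P l ∧
        C ⊆ {x | MvPolynomial.eval (fun i => x i) P = 0})
    (f : EuclideanSpace ℝ (Fin n) → ℂ) (hf : Integrable f (sphereMeasure n))
    (hvanish : ∀ ξ ∈ C, ∫ η, Complex.exp (-Complex.I * ((inner ℝ ξ η : ℝ) : ℂ)) * f η
        ∂(sphereMeasure n) = 0) :
    f =ᵐ[sphereMeasure n] 0 := by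
  have hmomc := NCU.cmoments C hC f hf hvanish
  have hre : (fun η => (f η).re) =ᵐ[sphereMeasure n] 0 := by
    refine NCU.real_case C hnonharm hf.re ?_
    intro ξ hξ k
    have h1 := hmomc ξ hξ k
    have h2 := integral_re (NCU.int_cpow hf ξ k)
    rw [h1] at h2
    calc ∫ η, (inner ℝ ξ η : ℝ) ^ k * (f η).re ∂(sphereMeasure n)
        = ∫ η, Complex.re (((inner ℝ ξ η : ℝ) : ℂ) ^ k * f η) ∂(sphereMeasure n) := by
          apply integral_congr_ae
          filter_upwards with η
          rw [← Complex.ofReal_pow, Complex.re_ofReal_mul]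
      _ = 0 := by simpa using h2
  have him : (fun η => (f η).im) =ᵐ[sphereMeasure n] 0 := by
    refine NCU.real_case C hnonharm hf.im ?_
    intro ξ hξ k
    have h1 := hmomc ξ hξ k
    have h2 := integral_im (NCU.int_cpow hf ξ k)
    rw [h1] at h2
    calc ∫ η, (inner ℝ ξ η : ℝ) ^ k * (f η).im ∂(sphereMeasure n)
        = ∫ η, Complex.im (((inner ℝ ξ η : ℝ) : ℂ) ^ k * f η) ∂(sphereMeasure n) := by
          apply integral_congr_ae
          filter_upwards with η
          rw [← Complex.ofReal_pow, Complex.im_ofReal_mul]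
      _ = 0 := by simpa using h2
  filter_upwards [hre, him] with η h1 h2
  apply Complex.ext
  · simpa using h1
  · simpa using h2
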